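/- arXiv:1808.01564 — 5 statements merged into one kernel-verified Lean document; each statement's English description precedes it below -/
import Mathlib

section
/- Let k ≥ 1 be an integer, h ≠ 0 a real number, t₀ ∈ ℝ, and let u₀, u₁, …, u_k ∈ ℝ. Let L be the Lagrange interpolation polynomial of degree at most k through the equidistant points (t₀ + i·h, u_i), i = 0, …, k. Then the derivative of L at t₀ equals (1/h)·∑_{i=0}^k α_i^k u_i, where α_0^k = −∑_{j=1}^k 1/j and α_i^k = (−1)^{i−1}·binom(k,i)/i for 1 ≤ i ≤ k. -/
/-- The coefficients `α_i^k` of the equidistant derivative approximation: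
`α_0^k = -∑_{j=1}^k 1/j` and `α_i^k = (-1)^(i-1) * binom(k,i) / i` for `1 ≤ i ≤ k`. -/
noncomputable def alphaCoef (k i : ℕ) : ℝ :=
  if i = 0 then -(∑ j ∈ Finset.Icc 1 k, (1 : ℝ) / j)
  else (-1) ^ (i - 1) * (Nat.choose k i : ℝ) / i

open Finset Polynomial

/-- Derivative of a finset product of polynomials. -/
lemma derivative_finset_prod {ι : Type*} [DecidableEq ι] {R : Type*} [CommSemiring R]
    (s : Finset ι) (f : ι → R[X]) :
    derivative (∏ j ∈ s, f j) = ∑ j ∈ s, (∏ a ∈ s.erase j, f a) * derivative (f j) := by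
  induction s using Finset.induction_on with
  | empty => simp
  | insert _ _ hi ih =>
    rename_i i s
    rw [Finset.prod_insert hi, derivative_mul, Finset.sum_insert hi, ih,
      Finset.erase_insert hi, Finset.mul_sum]
    congr 1
    · exact mul_comm _ _
    · refine Finset.sum_congr rfl fun j hj => ?_
      have hij : j ≠ i := fun hji => hi (hji ▸ hj)
      rw [Finset.erase_insert_of_ne (Ne.symm hij), Finset.prod_insert (fun hmem => hi (Finset.mem_of_mem_erase hmem)), mul_assoc]

lemma prod_ratio (i : ℕ) (hi : 1 ≤ i) : ∀ k, i ≤ k →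
    ∏ a ∈ (Finset.Icc 1 k).erase i, (-(a : ℝ)) / ((i : ℝ) - a)
      = (-1 : ℝ) ^ (i - 1) * (Nat.choose k i : ℝ) := by
  refine Nat.le_induction ?_ ?_
  · -- base case k = i
    have hset : (Finset.Icc 1 i).erase i = Finset.Icc 1 (i - 1) := by
      ext a; simp only [Finset.mem_erase, Finset.mem_Icc]; omega
    rw [hset, Nat.choose_self, Nat.cast_one, mul_one]
    have hrefl : ∏ a ∈ Finset.Icc 1 (i - 1), ((i : ℝ) - a)
        = ∏ a ∈ Finset.Icc 1 (i - 1), (a : ℝ) := by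
      refine Finset.prod_nbij' (fun a => i - a) (fun a => i - a) ?_ ?_ ?_ ?_ ?_ <;>
        intro a ha <;> simp only [Finset.mem_Icc] at * <;> try omega
      have h1 : (i - a : ℕ) = (i : ℝ) - a := by
        push_cast [Nat.cast_sub (by omega : a ≤ i)]; ring
      rw [← h1]
    have hne : ∏ a ∈ Finset.Icc 1 (i - 1), (a : ℝ) ≠ 0 := by
      refine Finset.prod_ne_zero_iff.mpr fun a ha => ?_
      simp only [Finset.mem_Icc] at ha
      exact Nat.cast_ne_zero.mpr (by omega)
    calc ∏ a ∈ Finset.Icc 1 (i - 1), (-(a : ℝ)) / ((i : ℝ) - a)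
        = (∏ a ∈ Finset.Icc 1 (i - 1), (-(a : ℝ))) /
            ∏ a ∈ Finset.Icc 1 (i - 1), ((i : ℝ) - a) := by
          rw [Finset.prod_div_distrib]
      _ = (-1 : ℝ) ^ (i - 1) := by
          rw [hrefl]
          have hneg : ∏ a ∈ Finset.Icc 1 (i - 1), (-(a : ℝ))
              = ∏ a ∈ Finset.Icc 1 (i - 1), ((-1 : ℝ) * a) :=
            Finset.prod_congr rfl fun a _ => by ring
          rw [hneg, Finset.prod_mul_distrib, Finset.prod_const, Nat.card_Icc]
          field_simp
          rw [Nat.add_sub_cancel]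
  · -- inductive step
    intro k hik IH
    have hset : (Finset.Icc 1 (k + 1)).erase i
        = insert (k + 1) ((Finset.Icc 1 k).erase i) := by
      ext a; simp only [Finset.mem_erase, Finset.mem_Icc, Finset.mem_insert]; omega
    have hnm : (k + 1) ∉ (Finset.Icc 1 k).erase i := by
      simp only [Finset.mem_erase, Finset.mem_Icc]; omega
    rw [hset, Finset.prod_insert hnm, IH]
    have hcast : (Nat.choose k i : ℝ) * ((k : ℝ) + 1)
        = (Nat.choose (k + 1) i : ℝ) * ((k : ℝ) + 1 - i) := by
      have h0 := Nat.choose_mul_succ_eq k i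
      calc (Nat.choose k i : ℝ) * ((k : ℝ) + 1)
          = ((k.choose i * (k + 1) : ℕ) : ℝ) := by push_cast; ring
        _ = (((k + 1).choose i * (k + 1 - i) : ℕ) : ℝ) := by rw [h0]
        _ = _ := by push_cast [Nat.cast_sub (show i ≤ k + 1 by omega)]; ring
    have hik' : (i : ℝ) ≤ k := by exact_mod_cast hik
    have hne : (i : ℝ) - ((k : ℝ) + 1) ≠ 0 := by intro hc; nlinarith
    have key : (-((k : ℝ) + 1)) * (Nat.choose k i : ℝ)
        = (Nat.choose (k + 1) i : ℝ) * ((i : ℝ) - ((k : ℝ) + 1)) := by linarith [hcast]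
    push_cast
    rw [div_mul_eq_mul_div, div_eq_iff hne]
    linear_combination ((-1 : ℝ)) ^ (i - 1) * key

theorem deriv_basis_eval (k : ℕ) (hk : 1 ≤ k) (h : ℝ) (hh : h ≠ 0) (t₀ : ℝ) (i : ℕ)
    (hi : i ∈ Finset.range (k + 1)) :
    (Polynomial.derivative
        (Lagrange.basis (Finset.range (k + 1)) (fun i => t₀ + (i : ℝ) * h) i)).eval t₀
      = alphaCoef k i / h := by
  classical
  set v : ℕ → ℝ := fun i => t₀ + (i : ℝ) * h with hv
  have hvsub : ∀ a b : ℕ, v a - v b = ((a : ℝ) - b) * h := by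
    intro a b; simp only [hv]; ring
  have ht : ∀ a : ℕ, t₀ - v a = -(a : ℝ) * h := by
    intro a; simp only [hv]; ring
  rw [Lagrange.basis, derivative_finset_prod, Polynomial.eval_finset_sum]
  have hder : ∀ x y : ℝ, derivative (Lagrange.basisDivisor x y) = C (x - y)⁻¹ := by
    intro x y
    simp [Lagrange.basisDivisor, derivative_sub]
  have hev : ∀ x y : ℝ, (Lagrange.basisDivisor x y).eval t₀ = (x - y)⁻¹ * (t₀ - y) := by
    intro x y; simp [Lagrange.basisDivisor]
  simp only [Polynomial.eval_mul, Polynomial.eval_prod, hder, Polynomial.eval_C, hev]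
  rcases Nat.eq_zero_or_pos i with hi0 | hipos
  · -- i = 0 case
    subst hi0
    have hset : (Finset.range (k + 1)).erase 0 = Finset.Icc 1 k := by
      ext a; simp only [Finset.mem_erase, Finset.mem_range, Finset.mem_Icc]; omega
    rw [hset]
    have hterm : ∀ b ∈ Finset.Icc 1 k,
        (∏ a ∈ (Finset.Icc 1 k).erase b, (v 0 - v a)⁻¹ * (t₀ - v a)) * (v 0 - v b)⁻¹
          = -(1 / b) * (1 / h) := by
      intro b hb
      simp only [Finset.mem_Icc] at hb
      have hprod : ∏ a ∈ (Finset.Icc 1 k).erase b, (v 0 - v a)⁻¹ * (t₀ - v a) = 1 := by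
        refine Finset.prod_eq_one fun a ha => ?_
        simp only [Finset.mem_erase, Finset.mem_Icc] at ha
        rw [hvsub, ht]
        have ha0 : (a : ℝ) ≠ 0 := Nat.cast_ne_zero.mpr (by omega)
        push_cast
        field_simp
        ring
      rw [hprod, one_mul, hvsub]
      have hb0 : (b : ℝ) ≠ 0 := Nat.cast_ne_zero.mpr (by omega)
      push_cast
      field_simp
      ring
    rw [Finset.sum_congr rfl hterm]
    simp only [alphaCoef, if_pos rfl]
    rw [← Finset.sum_mul, ← Finset.sum_neg_distrib]
    field_simp
    rw [if_pos trivial]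
  · -- i ≥ 1 case
    have hik : i ≤ k := by simp only [Finset.mem_range] at hi; omega
    have h0mem : (0 : ℕ) ∈ (Finset.range (k + 1)).erase i := by
      simp only [Finset.mem_erase, Finset.mem_range]; omega
    rw [Finset.sum_eq_single_of_mem 0 h0mem]
    · have hset : ((Finset.range (k + 1)).erase i).erase 0 = (Finset.Icc 1 k).erase i := by
        ext a
        simp only [Finset.mem_erase, Finset.mem_range, Finset.mem_Icc]; omega
      rw [hset]
      have hterm : ∀ a ∈ (Finset.Icc 1 k).erase i,
          (v i - v a)⁻¹ * (t₀ - v a) = -(a : ℝ) / ((i : ℝ) - a) := by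
        intro a ha
        simp only [Finset.mem_erase, Finset.mem_Icc] at ha
        rw [hvsub, ht]
        have hia : (i : ℝ) - a ≠ 0 := by
          intro hc
          have : (i : ℝ) = a := by linarith
          exact ha.1 (by exact_mod_cast this.symm)
        field_simp
      rw [Finset.prod_congr rfl hterm, prod_ratio i hipos k hik, hvsub]
      simp only [Nat.cast_zero, sub_zero]
      have hi0 : (i : ℝ) ≠ 0 := Nat.cast_ne_zero.mpr (by omega)
      simp only [alphaCoef, if_neg (by omega : i ≠ 0)]
      field_simp
      try ring
    · intro b hb hb0
      refine mul_eq_zero_of_left (Finset.prod_eq_zero (i := 0) ?_ ?_) _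
      · simp only [Finset.mem_erase, Finset.mem_range] at hb ⊢
        exact ⟨Ne.symm hb0, by omega, by omega⟩
      · rw [ht]
        simp

/-- The derivative at `t₀` of the Lagrange interpolation polynomial through the
equidistant points `(t₀ + i·h, u_i)`, `i = 0, …, k`, equals `(1/h)·∑_{i=0}^k α_i^k u_i`. -/
theorem deriv_lagrange_equidistant (k : ℕ) (hk : 1 ≤ k) (h : ℝ) (hh : h ≠ 0)
    (t₀ : ℝ) (u : ℕ → ℝ) :
    (Polynomial.derivative
        (Lagrange.interpolate (Finset.range (k + 1)) (fun i => t₀ + (i : ℝ) * h) u)).eval t₀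
      = (1 / h) * ∑ i ∈ Finset.range (k + 1), alphaCoef k i * u i := by
  classical
  rw [Lagrange.interpolate_apply, map_sum, Polynomial.eval_finset_sum]
  rw [Finset.mul_sum]
  refine Finset.sum_congr rfl fun i hi => ?_
  rw [Polynomial.derivative_C_mul, Polynomial.eval_mul, Polynomial.eval_C,
    deriv_basis_eval k hk h hh t₀ i hi]
  field_simp
end

section
/- Let k ≥ 1 be an integer, h ≠ 0 a real number, and t₀ ∈ ℝ. For every real polynomial p of degree at most k, p′(t₀) = (1/h)·∑_{i=0}^k α_i^k p(t₀ + i·h), where α_0^k = −∑_{j=1}^k 1/j and α_i^k = (−1)^{i−1}·binom(k,i)/i for 1 ≤ i ≤ k. -/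
open Finset Polynomial


lemma alt_sum_choose_real (n : ℕ) (hn : n ≠ 0) :
    ∑ i ∈ range (n + 1), (-1 : ℝ) ^ i * (n.choose i : ℝ) = 0 := by
  have h := Int.alternating_sum_range_choose_of_ne hn
  have h2 : ((∑ i ∈ range (n + 1), (-1 : ℤ) ^ i * (n.choose i : ℤ) : ℤ) : ℝ) = 0 := by
    rw [h]; norm_num
  push_cast at h2
  convert h2 using 2

/-- Alternating binomial sums annihilate polynomials of degree < k. -/
lemma alt_sum_choose_eval (k : ℕ) : ∀ p : Polynomial ℝ, p.degree < (k : ℕ) →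
    ∑ i ∈ range (k + 1), (-1 : ℝ) ^ i * (k.choose i : ℝ) * p.eval (i : ℝ) = 0 := by
  induction k with
  | zero =>
    intro p hp
    have hp0 : p = 0 := by
      by_contra h0
      exact absurd (Polynomial.zero_le_degree_iff.mpr h0) (by simpa using hp.not_ge)
    simp [hp0]
  | succ k ih =>
    intro p hp
    rcases eq_or_ne p 0 with rfl | hp0
    · simp
    set P := p.comp (X + C 1) with hP
    have hlc : P.leadingCoeff = p.leadingCoeff := by
      rw [hP, Polynomial.leadingCoeff_comp (by rw [Polynomial.natDegree_X_add_C]; norm_num)]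
      rw [Polynomial.leadingCoeff_X_add_C]; ring
    have hP0 : P ≠ 0 := by
      intro h0
      rw [h0, Polynomial.leadingCoeff_zero] at hlc
      exact hp0 (Polynomial.leadingCoeff_eq_zero.mp hlc.symm)
    have hdeg : p.degree = P.degree := by
      rw [Polynomial.degree_eq_natDegree hp0, Polynomial.degree_eq_natDegree hP0,
        hP, Polynomial.natDegree_comp, Polynomial.natDegree_X_add_C, mul_one]
    set q := p - P with hq
    have hqdeg : q.degree < (k : ℕ) := by
      have h1 : q.degree < p.degree := Polynomial.degree_sub_lt hdeg hp0 hlc.symm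
      have h3 : p.natDegree ≤ k := by
        have := (Polynomial.natDegree_lt_iff_degree_lt hp0).mpr hp
        omega
      calc q.degree < p.degree := h1
        _ = (p.natDegree : WithBot ℕ) := Polynomial.degree_eq_natDegree hp0
        _ ≤ (k : WithBot ℕ) := by exact_mod_cast h3
    have hqe : ∀ i : ℝ, q.eval i = p.eval i - p.eval (i + 1) := by
      intro i; simp [hq, hP]
    have key : ∑ i ∈ range (k + 1 + 1), (-1 : ℝ) ^ i * ((k+1).choose i : ℝ) * p.eval (i : ℝ)
        = ∑ j ∈ range (k + 1), (-1 : ℝ) ^ j * (k.choose j : ℝ) * q.eval (j : ℝ) := by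
      have g : ℕ → ℝ := fun i => 0
      calc ∑ i ∈ range (k + 1 + 1), (-1 : ℝ) ^ i * ((k+1).choose i : ℝ) * p.eval (i : ℝ)
          = (∑ j ∈ range (k + 1), (-1 : ℝ) ^ (j+1) * ((k+1).choose (j+1) : ℝ) * p.eval ((j+1 : ℕ) : ℝ))
            + (-1 : ℝ) ^ 0 * ((k+1).choose 0 : ℝ) * p.eval ((0:ℕ) : ℝ) :=
            Finset.sum_range_succ' _ _
        _ = (∑ j ∈ range (k + 1),
              ((-1 : ℝ) ^ (j+1) * (k.choose (j+1) : ℝ) * p.eval ((j+1 : ℕ) : ℝ)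
                + (-((-1 : ℝ) ^ j * (k.choose j : ℝ) * p.eval ((j:ℝ) + 1)))))
            + (-1 : ℝ) ^ 0 * (k.choose 0 : ℝ) * p.eval ((0:ℕ) : ℝ) := by
            congr 1
            · apply Finset.sum_congr rfl
              intro j _
              push_cast [Nat.choose_succ_succ]
              ring
            · simp
        _ = ((∑ j ∈ range (k + 1), (-1 : ℝ) ^ (j+1) * (k.choose (j+1) : ℝ) * p.eval ((j+1 : ℕ) : ℝ))
              + (-1 : ℝ) ^ 0 * (k.choose 0 : ℝ) * p.eval ((0:ℕ) : ℝ))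
            + ∑ j ∈ range (k + 1), (-((-1 : ℝ) ^ j * (k.choose j : ℝ) * p.eval ((j:ℝ) + 1))) := by
            rw [Finset.sum_add_distrib]; ring
        _ = (∑ i ∈ range (k + 1 + 1), (-1 : ℝ) ^ i * (k.choose i : ℝ) * p.eval (i : ℝ))
            + ∑ j ∈ range (k + 1), (-((-1 : ℝ) ^ j * (k.choose j : ℝ) * p.eval ((j:ℝ) + 1))) := by
            rw [Finset.sum_range_succ' (fun i => (-1 : ℝ) ^ i * (k.choose i : ℝ) * p.eval (i : ℝ))]
        _ = (∑ i ∈ range (k + 1), (-1 : ℝ) ^ i * (k.choose i : ℝ) * p.eval (i : ℝ))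
            + ∑ j ∈ range (k + 1), (-((-1 : ℝ) ^ j * (k.choose j : ℝ) * p.eval ((j:ℝ) + 1))) := by
            rw [Finset.sum_range_succ]
            simp
        _ = ∑ j ∈ range (k + 1), (-1 : ℝ) ^ j * (k.choose j : ℝ) * q.eval (j : ℝ) := by
            rw [← Finset.sum_add_distrib]
            apply Finset.sum_congr rfl
            intro j _
            rw [hqe]
            ring
    rw [key]
    exact ih q hqdeg


lemma harmonic_ident (k : ℕ) :
    ∑ i ∈ range (k + 1), (-1 : ℝ) ^ (i - 1) * (k.choose i : ℝ) / i
      = ∑ j ∈ Finset.Icc 1 k, (1 : ℝ) / j := by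
  induction k with
  | zero => simp
  | succ k ih =>
    have hstep : ∑ j ∈ range (k + 1), (-1 : ℝ) ^ j * ((k+1).choose (j+1) : ℝ) = 1 := by
      have h0 := alt_sum_choose_real (k + 1) (Nat.succ_ne_zero k)
      rw [Finset.sum_range_succ' _ (k + 1)] at h0
      have : ∑ j ∈ range (k + 1), (-1 : ℝ) ^ (j+1) * ((k+1).choose (j+1) : ℝ)
          = - ∑ j ∈ range (k + 1), (-1 : ℝ) ^ j * ((k+1).choose (j+1) : ℝ) := by
        rw [← Finset.sum_neg_distrib]
        apply Finset.sum_congr rfl; intro j _; ring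
      rw [this] at h0
      simp at h0
      linarith
    have hdiv : ∀ j ∈ range (k + 1),
        (-1 : ℝ) ^ j * (k.choose j : ℝ) / ((j:ℝ) + 1)
          = (-1 : ℝ) ^ j * ((k+1).choose (j+1) : ℝ) / ((k:ℝ) + 1) := by
      intro j _
      have hnat : (k + 1) * k.choose j = (k+1).choose (j+1) * (j + 1) :=
        Nat.add_one_mul_choose_eq k j
      have hr : ((k:ℝ) + 1) * (k.choose j : ℝ) = ((k+1).choose (j+1) : ℝ) * ((j:ℝ) + 1) := by
        exact_mod_cast hnat
      have hj : ((j:ℝ) + 1) ≠ 0 := by positivity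
      have hk : ((k:ℝ) + 1) ≠ 0 := by positivity
      rw [div_eq_div_iff hj hk, mul_assoc, mul_assoc]
      congr 1
      rw [mul_comm _ ((k:ℝ)+1)]
      rw [hr]
    calc ∑ i ∈ range (k + 2), (-1 : ℝ) ^ (i - 1) * ((k+1).choose i : ℝ) / i
        = (∑ j ∈ range (k + 1), (-1 : ℝ) ^ j * ((k+1).choose (j+1) : ℝ) / ((j:ℝ) + 1))
          + (-1 : ℝ) ^ (0 - 1) * ((k+1).choose 0 : ℝ) / (0:ℕ) := by
          rw [Finset.sum_range_succ' _ (k + 1)]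
          congr 1
          apply Finset.sum_congr rfl
          intro j _
          push_cast
          congr 1
      _ = ∑ j ∈ range (k + 1),
            ((-1 : ℝ) ^ j * (k.choose (j+1) : ℝ) / ((j:ℝ) + 1)
              + (-1 : ℝ) ^ j * (k.choose j : ℝ) / ((j:ℝ) + 1)) := by
          simp only [Nat.cast_zero, div_zero, add_zero]
          apply Finset.sum_congr rfl
          intro j _
          push_cast [Nat.choose_succ_succ]
          ring
      _ = (∑ j ∈ range (k + 1), (-1 : ℝ) ^ j * (k.choose (j+1) : ℝ) / ((j:ℝ) + 1))
          + ∑ j ∈ range (k + 1), (-1 : ℝ) ^ j * ((k+1).choose (j+1) : ℝ) / ((k:ℝ) + 1) := by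
          rw [Finset.sum_add_distrib]
          congr 1
          exact Finset.sum_congr rfl hdiv
      _ = (∑ i ∈ range (k + 1), (-1 : ℝ) ^ (i - 1) * (k.choose i : ℝ) / i) + 1 / ((k:ℝ) + 1) := by
          congr 1
          · rw [Finset.sum_range_succ' (fun i => (-1 : ℝ) ^ (i - 1) * (k.choose i : ℝ) / i),
              Finset.sum_range_succ]
            simp only [Nat.choose_succ_self, Nat.cast_zero, mul_zero, zero_mul, zero_div, add_zero,
              Nat.cast_zero, div_zero]
            apply Finset.sum_congr rfl
            intro j _
            push_cast
            congr 1
          · rw [← Finset.sum_div, hstep]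
      _ = ∑ j ∈ Finset.Icc 1 (k + 1), (1 : ℝ) / j := by
          rw [ih]
          rw [show Finset.Icc 1 (k + 1) = insert (k+1) (Finset.Icc 1 k) from ?_]
          · rw [Finset.sum_insert (by simp)]
            push_cast
            ring
          · ext x
            simp [Nat.lt_succ_iff]
            omega


lemma sum_alpha_pow (k : ℕ) (hk : 1 ≤ k) (m : ℕ) (hm : m ≤ k) :
    ∑ i ∈ range (k + 1), alphaCoef k i * (i : ℝ) ^ m = if m = 1 then 1 else 0 := by
  rcases Nat.eq_zero_or_pos m with rfl | hm1
  · -- m = 0 : sum of all coefficients is 0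
    simp only [pow_zero, mul_one, if_neg (by norm_num : (0:ℕ) ≠ 1)]
    rw [Finset.sum_range_succ' _ k]
    have h0 : alphaCoef k 0 = -(∑ j ∈ Finset.Icc 1 k, (1 : ℝ) / j) := by
      simp [alphaCoef]
    have h1 : ∑ j ∈ range k, alphaCoef k (j + 1)
        = ∑ i ∈ range (k + 1), (-1 : ℝ) ^ (i - 1) * (k.choose i : ℝ) / i := by
      rw [Finset.sum_range_succ' _ k]
      simp [alphaCoef]
    rw [h0, h1, harmonic_ident]
    ring
  · -- m ≥ 1
    have key := alt_sum_choose_eval k (X ^ (m - 1)) (by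
      rw [Polynomial.degree_X_pow]
      exact_mod_cast lt_of_lt_of_le (by omega : m - 1 < m) (by exact_mod_cast hm)
      )
    simp only [Polynomial.eval_pow, Polynomial.eval_X] at key
    rw [Finset.sum_range_succ' _ k] at key ⊢
    have e0 : alphaCoef k 0 * ((0 : ℕ) : ℝ) ^ m = 0 := by
      rw [Nat.cast_zero, zero_pow (by omega : m ≠ 0)]; ring
    have e1 : ∀ j ∈ range k, alphaCoef k (j + 1) * ((j + 1 : ℕ) : ℝ) ^ m
        = -((-1 : ℝ) ^ (j + 1) * (k.choose (j + 1) : ℝ) * ((j + 1 : ℕ) : ℝ) ^ (m - 1)) := by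
      intro j _
      have : alphaCoef k (j + 1) = (-1) ^ j * (k.choose (j + 1) : ℝ) / ((j : ℝ) + 1) := by
        simp [alphaCoef]
      rw [this]
      have hj : ((j : ℝ) + 1) ≠ 0 := by positivity
      have hpow : ((j + 1 : ℕ) : ℝ) ^ m = ((j : ℝ) + 1) * ((j + 1 : ℕ) : ℝ) ^ (m - 1) := by
        push_cast
        rw [← pow_succ']
        congr 1
        omega
      rw [hpow]
      push_cast
      field_simp
      ring
    rw [Finset.sum_congr rfl e1, e0, add_zero, Finset.sum_neg_distrib]
    have key2 : ∑ j ∈ range k, (-1 : ℝ) ^ (j + 1) * (k.choose (j + 1) : ℝ) * ((j + 1 : ℕ) : ℝ) ^ (m - 1)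
        = -(0 : ℝ) ^ (m - 1) := by
      have := key
      push_cast at this ⊢
      norm_num at this ⊢
      linarith
    rw [key2, neg_neg]
    rcases Nat.eq_or_lt_of_le hm1 with h1 | h1
    · rw [← h1]; norm_num
    · rw [zero_pow (by omega), if_neg (by omega)]

/-- For every real polynomial `p` of degree at most `k`,
`p′(t₀) = (1/h)·∑_{i=0}^k α_i^k p(t₀ + i·h)`. -/
theorem deriv_eq_equidistant_combination (k : ℕ) (hk : 1 ≤ k) (h : ℝ) (hh : h ≠ 0)
    (t₀ : ℝ) (p : Polynomial ℝ) (hp : p.degree ≤ (k : ℕ)) :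
    (Polynomial.derivative p).eval t₀
      = (1 / h) * ∑ i ∈ Finset.range (k + 1), alphaCoef k i * p.eval (t₀ + (i : ℝ) * h) := by
  set q := Polynomial.taylor t₀ p with hqdef
  have hnd : q.natDegree < k + 1 := by
    rw [hqdef, Polynomial.natDegree_taylor]
    have := Polynomial.natDegree_le_iff_degree_le.mpr hp
    omega
  have heval : ∀ x : ℝ, p.eval (t₀ + x) = ∑ m ∈ range (k + 1), q.coeff m * x ^ m := by
    intro x
    rw [add_comm, ← Polynomial.taylor_eval t₀ p x]
    exact Polynomial.eval_eq_sum_range' hnd x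
  have hq1 : q.coeff 1 = (Polynomial.derivative p).eval t₀ := Polynomial.taylor_coeff_one t₀ p
  rw [← hq1]
  have step1 : ∑ i ∈ range (k + 1), alphaCoef k i * p.eval (t₀ + (i : ℝ) * h)
      = ∑ m ∈ range (k + 1), (q.coeff m * h ^ m) * ∑ i ∈ range (k + 1), alphaCoef k i * (i : ℝ) ^ m := by
    simp_rw [heval, Finset.mul_sum]
    rw [Finset.sum_comm]
    apply Finset.sum_congr rfl
    intro m _
    apply Finset.sum_congr rfl
    intro i _
    ring
  rw [step1]
  have step2 : ∀ m ∈ range (k + 1),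
      (q.coeff m * h ^ m) * ∑ i ∈ range (k + 1), alphaCoef k i * (i : ℝ) ^ m
        = if m = 1 then q.coeff 1 * h else 0 := by
    intro m hm
    rw [sum_alpha_pow k hk m (by simp at hm; omega)]
    split_ifs with h1
    · subst h1; ring
    · ring
  rw [Finset.sum_congr rfl step2, Finset.sum_ite_eq' (range (k + 1)) 1 (fun _ => q.coeff 1 * h)]
  rw [if_pos (by simp; omega)]
  field_simp
end

section
/- Let k ≥ 1 be an integer, h ≠ 0 a real number, t₀ ∈ ℝ, and let u₀, u₁, u₄, …, u_{k²} ∈ ℝ be values assigned to the nodes t₀ + i²·h, i = 0, …, k. Let L be the Lagrange interpolation polynomial of degree at most k through the non-equidistant points (t₀ + i²·h, u_{i²}), i = 0, …, k. Then the derivative of L at t₀ equals (1/h)·∑_{i=0}^k β_i^k u_{i²}, where β_0^k = −∑_{j=1}^k 1/j² and β_i^k = (−1)^{k−1}·(k!)² / (i² · ∏_{0≤j≤k, j≠i} (i² − j²)) for 1 ≤ i ≤ k. -/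
/-- The coefficients `β_i^k` of the non-equidistant derivative approximation:
`β_0^k = -∑_{j=1}^k 1/j²` and
`β_i^k = (-1)^(k-1)·(k!)² / (i² · ∏_{0≤j≤k, j≠i} (i² − j²))` for `1 ≤ i ≤ k`. -/
noncomputable def betaCoef (k i : ℕ) : ℝ :=
  if i = 0 then -(∑ j ∈ Finset.Icc 1 k, (1 : ℝ) / (j : ℝ) ^ 2)
  else (-1) ^ (k - 1) * ((Nat.factorial k : ℝ)) ^ 2 /
    ((i : ℝ) ^ 2 * ∏ j ∈ (Finset.range (k + 1)).erase i, ((i : ℝ) ^ 2 - (j : ℝ) ^ 2))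

open Finset Polynomial

theorem deriv_fin_prod {ι} [DecidableEq ι] (s : Finset ι) (f : ι → Polynomial ℝ) :
    Polynomial.derivative (∏ b ∈ s, f b)
      = ∑ b ∈ s, (∏ a ∈ s.erase b, f a) * Polynomial.derivative (f b) := by
  classical
  induction s using Finset.induction_on with
  | empty => simp
  | @insert a s ha ih =>
      rw [Finset.prod_insert ha, Polynomial.derivative_mul, ih, Finset.sum_insert ha,
        Finset.erase_insert ha, Finset.mul_sum]
      congr 1
      · rw [mul_comm]
      · apply Finset.sum_congr rfl
        intro b hb
        rw [Finset.erase_insert_of_ne (by rintro rfl; exact ha hb),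
          Finset.prod_insert (fun h => ha (Finset.mem_of_mem_erase h))]
        ring

lemma sq_cast_ne {i j : ℕ} (hij : i ≠ j) : ((i : ℝ))^2 - ((j : ℝ))^2 ≠ 0 := by
  intro hs
  apply hij
  have h2 : (i : ℝ)^2 = (j : ℝ)^2 := by linarith
  have h3 : ((i^2 : ℕ) : ℝ) = ((j^2 : ℕ) : ℝ) := by push_cast; exact h2
  have h4 : i^2 = j^2 := Nat.cast_injective h3
  nlinarith [Nat.lt_or_ge i j]

lemma erase_range_zero (k : ℕ) : (Finset.range (k+1)).erase 0 = Finset.Icc 1 k := by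
  ext j
  simp only [Finset.mem_erase, Finset.mem_range, Finset.mem_Icc]
  omega

lemma eval_deriv_basis (k : ℕ) (hk : 1 ≤ k) (h : ℝ) (hh : h ≠ 0) (t₀ : ℝ)
    (i : ℕ) (hi : i ∈ Finset.range (k+1)) :
    Polynomial.eval t₀ (Polynomial.derivative
      (Lagrange.basis (Finset.range (k+1)) (fun j => t₀ + ((j : ℝ)^2) * h) i))
    = betaCoef k i / h := by
  set v : ℕ → ℝ := fun j => t₀ + ((j : ℝ)^2) * h with hv
  have hdbd : ∀ x y : ℝ, Polynomial.derivative (Lagrange.basisDivisor x y)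
      = Polynomial.C (x - y)⁻¹ := by
    intro x y; simp [Lagrange.basisDivisor]
  have hvsub : ∀ a b : ℕ, v a - v b = ((a:ℝ)^2 - (b:ℝ)^2) * h := by
    intro a b; simp only [hv]; ring
  have ht0 : ∀ b : ℕ, t₀ - v b = -((b:ℝ)^2) * h := by
    intro b; simp only [hv]; ring
  have hv0 : v 0 = t₀ := by simp [hv]
  rw [Lagrange.basis, deriv_fin_prod, Polynomial.eval_finset_sum]
  simp only [hdbd, Polynomial.eval_mul, Polynomial.eval_C, Polynomial.eval_prod]
  have hebd : ∀ a b : ℕ, Polynomial.eval t₀ (Lagrange.basisDivisor (v a) (v b))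
      = (v a - v b)⁻¹ * (t₀ - v b) := by
    intro a b; simp [Lagrange.basisDivisor]
  by_cases hi0 : i = 0
  · subst hi0
    rw [erase_range_zero]
    have key : ∀ j ∈ Finset.Icc 1 k,
        (∏ a ∈ (Finset.Icc 1 k).erase j,
            Polynomial.eval t₀ (Lagrange.basisDivisor (v 0) (v a))) * (v 0 - v j)⁻¹
          = (1 / ((j:ℝ)^2)) * (-1) / h := by
      intro j hj
      have hj0 : j ≠ 0 := by simp only [Finset.mem_Icc] at hj; omega
      have hprod1 : (∏ a ∈ (Finset.Icc 1 k).erase j,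
          Polynomial.eval t₀ (Lagrange.basisDivisor (v 0) (v a))) = 1 := by
        apply Finset.prod_eq_one
        intro a ha
        have ha0 : a ≠ 0 := by
          have := Finset.mem_of_mem_erase ha
          simp only [Finset.mem_Icc] at this; omega
        have haa : ((a:ℝ))^2 ≠ 0 := pow_ne_zero _ (Nat.cast_ne_zero.mpr ha0)
        rw [hebd, hv0, ht0 a]
        rw [inv_mul_cancel₀ (mul_ne_zero (neg_ne_zero.mpr haa) hh)]
      have hjj : ((j:ℝ))^2 ≠ 0 := pow_ne_zero _ (Nat.cast_ne_zero.mpr hj0)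
      rw [hprod1, one_mul]
      have hvj : v 0 - v j = -((j:ℝ)^2) * h := by rw [hv0, ht0 j]
      rw [hvj]
      field_simp
    rw [Finset.sum_congr rfl key, betaCoef]
    simp only [if_pos rfl]
    rw [eq_div_iff hh, Finset.sum_mul, ← Finset.sum_neg_distrib]
    apply Finset.sum_congr rfl
    intro x _
    rw [div_mul_cancel₀ _ hh]
    ring
  · have hiR : ((i:ℝ))^2 ≠ 0 := pow_ne_zero _ (Nat.cast_ne_zero.mpr hi0)
    have h0mem : (0:ℕ) ∈ (Finset.range (k+1)).erase i := by
      simp only [Finset.mem_erase, Finset.mem_range]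
      exact ⟨Ne.symm hi0, by omega⟩
    rw [Finset.sum_eq_single_of_mem 0 h0mem (fun j hj hj0 => by
      apply mul_eq_zero_of_left
      apply Finset.prod_eq_zero (Finset.mem_erase.mpr ⟨Ne.symm hj0, h0mem⟩)
      rw [hebd, hv0]
      simp)]
    have herase : ((Finset.range (k+1)).erase i).erase 0 = (Finset.Icc 1 k).erase i := by
      ext a
      simp only [Finset.mem_erase, Finset.mem_range, Finset.mem_Icc]
      omega
    set T := (Finset.Icc 1 k).erase i with hT
    have hik : i ∈ Finset.Icc 1 k := by
      simp only [Finset.mem_range] at hi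
      simp only [Finset.mem_Icc]; omega
    have hfac : ∀ a ∈ T, Polynomial.eval t₀ (Lagrange.basisDivisor (v i) (v a))
        = (-((a:ℝ)^2)) * (((i:ℝ)^2 - (a:ℝ)^2))⁻¹ := by
      intro a ha
      have hai : a ≠ i := (Finset.mem_erase.mp ha).1
      have hne : ((i:ℝ))^2 - ((a:ℝ))^2 ≠ 0 := sq_cast_ne (Ne.symm hai)
      rw [hebd, hvsub, ht0]
      field_simp
    rw [herase, Finset.prod_congr rfl hfac, Finset.prod_mul_distrib,
      Finset.prod_inv_distrib]
    have hcardT : T.card = k - 1 := by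
      rw [hT, Finset.card_erase_of_mem hik, Nat.card_Icc]
      omega
    have hprodneg : (∏ a ∈ T, (-((a:ℝ)^2))) = (-1)^(k-1) * ∏ a ∈ T, ((a:ℝ)^2) := by
      rw [← hcardT]
      rw [show (fun a : ℕ => -((a:ℝ)^2)) = fun a : ℕ => (-1) * ((a:ℝ)^2) from
        funext fun a => by ring]
      rw [Finset.prod_mul_distrib, Finset.prod_const]
    have hXfact : ((i:ℝ)^2) * (∏ a ∈ T, ((a:ℝ)^2)) = ((Nat.factorial k : ℝ))^2 := by
      rw [hT, Finset.mul_prod_erase (Finset.Icc 1 k) (fun a => ((a:ℝ))^2) hik, Finset.prod_pow]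
      rw [show (∏ a ∈ Finset.Icc 1 k, (a:ℝ)) = ((Nat.factorial k : ℝ)) from by
        rw [← Nat.cast_prod]
        congr 1
        rw [← Finset.Ico_add_one_right_eq_Icc]
        exact Finset.prod_Ico_id_eq_factorial k]
    have hQ : (∏ j ∈ (Finset.range (k+1)).erase i, ((i:ℝ)^2 - (j:ℝ)^2))
        = ((i:ℝ)^2) * ∏ a ∈ T, ((i:ℝ)^2 - (a:ℝ)^2) := by
      rw [← Finset.mul_prod_erase ((Finset.range (k+1)).erase i) (fun j => ((i:ℝ)^2 - (j:ℝ)^2)) h0mem, herase]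
      norm_num
    have hYne : (∏ a ∈ T, ((i:ℝ)^2 - (a:ℝ)^2)) ≠ 0 := by
      rw [Finset.prod_ne_zero_iff]
      intro a ha
      exact sq_cast_ne (Ne.symm (Finset.mem_erase.mp ha).1)
    have hvi0 : v i - v 0 = ((i:ℝ)^2) * h := by rw [hvsub]; norm_num
    rw [hprodneg, hvi0, betaCoef]
    simp only [if_neg hi0, hQ]
    rw [← hXfact]
    field_simp

/-- The derivative at `t₀` of the Lagrange interpolation polynomial through the
non-equidistant points `(t₀ + i²·h, u_{i²})`, `i = 0, …, k`, equals
`(1/h)·∑_{i=0}^k β_i^k u_{i²}`. -/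
theorem deriv_lagrange_nonequidistant (k : ℕ) (hk : 1 ≤ k) (h : ℝ) (hh : h ≠ 0)
    (t₀ : ℝ) (u : ℕ → ℝ) :
    (Polynomial.derivative
        (Lagrange.interpolate (Finset.range (k + 1)) (fun i => t₀ + ((i : ℝ) ^ 2) * h)
          (fun i => u (i ^ 2)))).eval t₀
      = (1 / h) * ∑ i ∈ Finset.range (k + 1), betaCoef k i * u (i ^ 2) := by
  rw [Lagrange.interpolate_apply, map_sum, Polynomial.eval_finset_sum, Finset.mul_sum]
  apply Finset.sum_congr rfl
  intro i hi
  rw [Polynomial.derivative_mul, Polynomial.derivative_C, zero_mul, zero_add,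
    Polynomial.eval_mul, Polynomial.eval_C, eval_deriv_basis k hk h hh t₀ i hi]
  ring
end

section
/- Let g : ℝ → ℝ be 6-times continuously differentiable with |g^{(6)}(x)| ≤ M for all x ∈ ℝ, and suppose x ↦ g(x)e^{−x²} is integrable on ℝ. Then |∫_ℝ g(x) e^{−x²} dx − ((√π/6)·g(−√(3/2)) + (2√π/3)·g(0) + (√π/6)·g(√(3/2)))| ≤ (√π/960)·M. -/
open Real Set MeasureTheory

set_option linter.unreachableTactic false
set_option linter.unusedTactic false
set_option maxHeartbeats 1000000

lemma int_pow_gauss (n : ℕ) : Integrable (fun x : ℝ => x ^ n * Real.exp (-(x ^ 2))) := by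
  have h := integrable_rpow_mul_exp_neg_mul_sq (b := 1) one_pos (s := (n : ℝ)) (by exact_mod_cast neg_one_lt_zero.trans_le (Nat.cast_nonneg n))
  simpa [Real.rpow_natCast] using h

lemma mom_rec (n : ℕ) : (∫ x : ℝ, x ^ (n + 2) * Real.exp (-(x ^ 2)))
    = (n + 1) / 2 * ∫ x : ℝ, x ^ n * Real.exp (-(x ^ 2)) := by
  have hd : ∀ x : ℝ, HasDerivAt (fun x : ℝ => x ^ (n + 1) * Real.exp (-(x ^ 2)))
      ((n + 1) * (x ^ n * Real.exp (-(x ^ 2))) - 2 * (x ^ (n + 2) * Real.exp (-(x ^ 2)))) x := by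
    intro x
    have h1 : HasDerivAt (fun x : ℝ => x ^ (n + 1)) ((n + 1) * x ^ n) x := by
      simpa using hasDerivAt_pow (n + 1) x
    have h2 : HasDerivAt (fun x : ℝ => Real.exp (-(x ^ 2))) ((-(2 * x)) * Real.exp (-(x ^ 2))) x := by
      have hx : HasDerivAt (fun x : ℝ => -(x ^ 2)) (-(2 * x)) x := by
        simpa using (hasDerivAt_pow 2 x).fun_neg
      simpa [mul_comm] using hx.exp
    have := h1.fun_mul h2
    refine this.congr_deriv ?_
    ring
  have hint : Integrable (fun x : ℝ => (n + 1 : ℝ) * (x ^ n * Real.exp (-(x ^ 2)))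
      - 2 * (x ^ (n + 2) * Real.exp (-(x ^ 2)))) :=
    ((int_pow_gauss n).const_mul _).sub ((int_pow_gauss (n + 2)).const_mul _)
  have hz := integral_eq_zero_of_hasDerivAt_of_integrable hd hint (int_pow_gauss (n + 1))
  rw [integral_sub ((int_pow_gauss n).const_mul _) ((int_pow_gauss (n + 2)).const_mul _),
    integral_const_mul, integral_const_mul] at hz
  linarith

lemma mom0 : (∫ x : ℝ, Real.exp (-(x ^ 2))) = Real.sqrt Real.pi := by
  have := integral_gaussian 1
  simpa using this

lemma mom1 : (∫ x : ℝ, x ^ 1 * Real.exp (-(x ^ 2))) = 0 := by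
  have hd : ∀ x : ℝ, HasDerivAt (fun x : ℝ => -Real.exp (-(x ^ 2)) / 2)
      (x ^ 1 * Real.exp (-(x ^ 2))) x := by
    intro x
    have h2 : HasDerivAt (fun x : ℝ => Real.exp (-(x ^ 2))) ((-(2 * x)) * Real.exp (-(x ^ 2))) x := by
      have hx : HasDerivAt (fun x : ℝ => -(x ^ 2)) (-(2 * x)) x := by
        simpa using (hasDerivAt_pow 2 x).fun_neg
      simpa [mul_comm] using hx.exp
    have := (h2.fun_neg).div_const 2
    refine this.congr_deriv ?_
    ring
  have hint := int_pow_gauss 1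
  have : Integrable (fun x : ℝ => -Real.exp (-(x ^ 2)) / 2) := by
    have h := integrable_exp_neg_mul_sq (b := 1) one_pos
    simpa using ((h.neg).div_const 2)
  exact integral_eq_zero_of_hasDerivAt_of_integrable hd hint this

-- assume t1 contents; test moments values
lemma mom0' : (∫ x : ℝ, x ^ 0 * Real.exp (-(x ^ 2))) = Real.sqrt Real.pi := by
  simpa using mom0
lemma mom2 : (∫ x : ℝ, x ^ 2 * Real.exp (-(x ^ 2))) = Real.sqrt Real.pi / 2 := by
  have := mom_rec 0; rw [mom0'] at this; rw [this]; push_cast; ring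
lemma mom3 : (∫ x : ℝ, x ^ 3 * Real.exp (-(x ^ 2))) = 0 := by
  have := mom_rec 1; rw [mom1] at this; rw [this]; ring
lemma mom4 : (∫ x : ℝ, x ^ 4 * Real.exp (-(x ^ 2))) = 3 * Real.sqrt Real.pi / 4 := by
  have := mom_rec 2; rw [mom2] at this; rw [this]; push_cast; ring
lemma mom5 : (∫ x : ℝ, x ^ 5 * Real.exp (-(x ^ 2))) = 0 := by
  have := mom_rec 3; rw [mom3] at this; rw [this]; ring
lemma mom6 : (∫ x : ℝ, x ^ 6 * Real.exp (-(x ^ 2))) = 15 * Real.sqrt Real.pi / 8 := by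
  have := mom_rec 4; rw [mom4] at this; rw [this]; push_cast; ring

lemma rolle_seq {n : ℕ} {f : ℝ → ℝ} (hf : Differentiable ℝ f) (t : Fin (n + 2) → ℝ)
    (ht : StrictMono t) (hz : ∀ i, f (t i) = 0) :
    ∃ u : Fin (n + 1) → ℝ, StrictMono u ∧ (∀ i, deriv f (u i) = 0) ∧
      ∀ i : Fin (n + 1), t i.castSucc < u i ∧ u i < t i.succ := by
  have key : ∀ i : Fin (n + 1), ∃ c ∈ Ioo (t i.castSucc) (t i.succ), deriv f c = 0 := by
    intro i
    exact exists_deriv_eq_zero (ht (Fin.castSucc_lt_succ (i := i))) (hf.continuous.continuousOn)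
      ((hz i.castSucc).trans (hz i.succ).symm)
  choose u hu hu0 using key
  refine ⟨u, ?_, hu0, fun i => ⟨(hu i).1, (hu i).2⟩⟩
  have hlt : ∀ i : Fin n, u i.castSucc < u i.succ := by
    intro i
    have h1 : u i.castSucc < t i.castSucc.succ := (hu i.castSucc).2
    have h2 : t i.succ.castSucc < u i.succ := (hu i.succ).1
    have : t i.castSucc.succ = t i.succ.castSucc := by rw [Fin.succ_castSucc]
    linarith [this ▸ h1]
  exact Fin.strictMono_iff_lt_succ.mpr hlt

lemma sm4 {a b c d : ℝ} (h1 : a < b) (h2 : b < c) (h3 : c < d) : StrictMono ![a, b, c, d] := by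
  apply Fin.strictMono_iff_lt_succ.mpr
  intro i
  fin_cases i <;> simpa

lemma sm6 {a b c d e f : ℝ} (h1 : a < b) (h2 : b < c) (h3 : c < d) (h4 : d < e) (h5 : e < f) :
    StrictMono ![a, b, c, d, e, f] := by
  apply Fin.strictMono_iff_lt_succ.mpr
  intro i
  fin_cases i <;> simpa

lemma four_to_six {φ : ℝ → ℝ} (hφ : Differentiable ℝ φ) (t : Fin 4 → ℝ) (ht : StrictMono t)
    (hz : ∀ i, φ (t i) = 0) (j : Fin 4) (hd : ∀ i, i ≠ j → deriv φ (t i) = 0) :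
    ∃ v : Fin 6 → ℝ, StrictMono v ∧ ∀ i, deriv φ (v i) = 0 := by
  obtain ⟨u, hu, hu0, hiu⟩ := rolle_seq (n := 2) hφ t ht hz
  have b0 : t 0 < u 0 ∧ u 0 < t 1 := by simpa using hiu 0
  have b1 : t 1 < u 1 ∧ u 1 < t 2 := by simpa using hiu 1
  have b2 : t 2 < u 2 ∧ u 2 < t 3 := by simpa using hiu 2
  fin_cases j
  · refine ⟨![u 0, t 1, u 1, t 2, u 2, t 3], sm6 b0.2 b1.1 b1.2 b2.1 b2.2, ?_⟩
    intro i; fin_cases i <;> simp <;> first | exact hu0 _ | exact hd _ (by decide)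
  · refine ⟨![t 0, u 0, u 1, t 2, u 2, t 3], sm6 b0.1 (b0.2.trans b1.1) b1.2 b2.1 b2.2, ?_⟩
    intro i; fin_cases i <;> simp <;> first | exact hu0 _ | exact hd _ (by decide)
  · refine ⟨![t 0, u 0, t 1, u 1, u 2, t 3], sm6 b0.1 b0.2 b1.1 (b1.2.trans b2.1) b2.2, ?_⟩
    intro i; fin_cases i <;> simp <;> first | exact hu0 _ | exact hd _ (by decide)
  · refine ⟨![t 0, u 0, t 1, u 1, t 2, u 2], sm6 b0.1 b0.2 b1.1 b1.2 b2.1, ?_⟩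
    intro i; fin_cases i <;> simp <;> first | exact hu0 _ | exact hd _ (by decide)

lemma six_to_final {φ : ℝ → ℝ} (hφ : ContDiff ℝ 6 φ) (v : Fin 6 → ℝ) (hv : StrictMono v)
    (hz : ∀ i, deriv φ (v i) = 0) : ∃ ξ, iteratedDeriv 6 φ ξ = 0 := by
  have hdiff : ∀ k : ℕ, k < 6 → Differentiable ℝ (iteratedDeriv k φ) := by
    intro k hk
    exact hφ.differentiable_iteratedDeriv k (by exact_mod_cast hk)
  have h1 : ∀ i, iteratedDeriv 1 φ (v i) = 0 := by
    intro i; rw [iteratedDeriv_one]; exact hz i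
  obtain ⟨v2, hv2, hz2, -⟩ := rolle_seq (n := 4) (hdiff 1 (by norm_num)) v hv h1
  have h2 : ∀ i, iteratedDeriv 2 φ (v2 i) = 0 := by
    intro i; rw [iteratedDeriv_succ]; exact hz2 i
  obtain ⟨v3, hv3, hz3, -⟩ := rolle_seq (n := 3) (hdiff 2 (by norm_num)) v2 hv2 h2
  have h3 : ∀ i, iteratedDeriv 3 φ (v3 i) = 0 := by
    intro i; rw [iteratedDeriv_succ]; exact hz3 i
  obtain ⟨v4, hv4, hz4, -⟩ := rolle_seq (n := 2) (hdiff 3 (by norm_num)) v3 hv3 h3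
  have h4 : ∀ i, iteratedDeriv 4 φ (v4 i) = 0 := by
    intro i; rw [iteratedDeriv_succ]; exact hz4 i
  obtain ⟨v5, hv5, hz5, -⟩ := rolle_seq (n := 1) (hdiff 4 (by norm_num)) v4 hv4 h4
  have h5 : ∀ i, iteratedDeriv 5 φ (v5 i) = 0 := by
    intro i; rw [iteratedDeriv_succ]; exact hz5 i
  obtain ⟨v6, hv6, hz6, -⟩ := rolle_seq (n := 0) (hdiff 5 (by norm_num)) v5 hv5 h5
  exact ⟨v6 0, by rw [iteratedDeriv_succ]; exact hz6 0⟩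

lemma pointwise_bound (M : ℝ) (h : ℝ → ℝ) (hh : ContDiff ℝ 6 h)
    (hzm : h (-Real.sqrt (3/2)) = 0) (hz0 : h 0 = 0) (hzp : h (Real.sqrt (3/2)) = 0)
    (hdm : deriv h (-Real.sqrt (3/2)) = 0) (hd0 : deriv h 0 = 0)
    (hdp : deriv h (Real.sqrt (3/2)) = 0)
    (hM : ∀ y : ℝ, |iteratedDeriv 6 h y| ≤ M) (x : ℝ) :
    |h x| ≤ M / 720 * (x ^ 2 * (x ^ 2 - 3/2) ^ 2) := by
  set s := Real.sqrt (3/2) with hs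
  have hs2 : s ^ 2 = 3/2 := Real.sq_sqrt (by norm_num)
  have hspos : 0 < s := Real.sqrt_pos.mpr (by norm_num)
  set W := x ^ 2 * (x ^ 2 - 3/2) ^ 2 with hWdef
  have hW : 0 ≤ W := by positivity
  have key : ∃ ξ : ℝ, 720 * h x = iteratedDeriv 6 h ξ * W := by
    by_cases hx0 : x = 0
    · exact ⟨0, by simp [hWdef, hx0, hz0]⟩
    by_cases hxp : x = s
    · refine ⟨0, ?_⟩
      rw [hWdef, hxp, hzp, hs2]
      ring
    by_cases hxm : x = -s
    · refine ⟨0, ?_⟩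
      have hns : (-s) ^ 2 = 3/2 := by rw [show (-s)^2 = s^2 by ring, hs2]
      rw [hWdef, hxm, hzm, hns]
      ring
    -- main case
    set c := h x with hc
    set φ : ℝ → ℝ := fun t => h t * W - c * (t ^ 6 - 3 * t ^ 4 + 9/4 * t ^ 2) with hφdef
    have hpoly : ContDiff ℝ 6 (fun t : ℝ => t ^ 6 - 3 * t ^ 4 + 9/4 * t ^ 2) := by
      fun_prop
    have hφc : ContDiff ℝ 6 φ := (hh.mul contDiff_const).sub (contDiff_const.mul hpoly)
    have hφd : Differentiable ℝ φ := hφc.differentiable (by norm_num)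
    have hhd : Differentiable ℝ h := hh.differentiable (by norm_num)
    -- values of the polynomial and its derivative at the nodes
    have hw0s : s ^ 6 - 3 * s ^ 4 + 9/4 * s ^ 2 = 0 := by
      rw [show s ^ 6 - 3 * s ^ 4 + 9/4 * s ^ 2
          = (s^2)^3 - 3*(s^2)^2 + 9/4*(s^2) by ring, hs2]; norm_num
    have hw0m : (-s) ^ 6 - 3 * (-s) ^ 4 + 9/4 * (-s) ^ 2 = 0 := by
      rw [show (-s) ^ 6 - 3 * (-s) ^ 4 + 9/4 * (-s) ^ 2
          = (s^2)^3 - 3*(s^2)^2 + 9/4*(s^2) by ring, hs2]; norm_num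
    have hw1s : 6 * s ^ 5 - 12 * s ^ 3 + 9/2 * s = 0 := by
      rw [show 6 * s ^ 5 - 12 * s ^ 3 + 9/2 * s
          = s * (6*(s^2)^2 - 12*(s^2) + 9/2) by ring, hs2]; ring
    have hw1m : 6 * (-s) ^ 5 - 12 * (-s) ^ 3 + 9/2 * (-s) = 0 := by
      rw [show 6 * (-s) ^ 5 - 12 * (-s) ^ 3 + 9/2 * (-s)
          = -(s * (6*(s^2)^2 - 12*(s^2) + 9/2)) by ring, hs2]; ring
    -- derivative of φ
    have hw01 : ∀ t : ℝ, HasDerivAt (fun t : ℝ => t ^ 6 - 3 * t ^ 4 + 9/4 * t ^ 2)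
        (6 * t ^ 5 - 12 * t ^ 3 + 9/2 * t) t := by
      intro t
      have := ((hasDerivAt_pow 6 t).fun_sub ((hasDerivAt_pow 4 t).const_mul 3)).fun_add
        ((hasDerivAt_pow 2 t).const_mul (9/4))
      refine this.congr_deriv ?_
      all_goals first | ring | (norm_num; try ring)
    have hφderiv : deriv φ = fun t => deriv h t * W - c * (6 * t ^ 5 - 12 * t ^ 3 + 9/2 * t) := by
      funext t
      exact (((hhd t).hasDerivAt.mul_const W).sub ((hw01 t).const_mul c)).deriv
    -- zeros of φ
    have hφzm : φ (-s) = 0 := by rw [hφdef]; simp only; rw [hzm, hw0m]; ring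
    have hφz0 : φ 0 = 0 := by rw [hφdef]; simp only; rw [hz0]; ring
    have hφzp : φ s = 0 := by rw [hφdef]; simp only; rw [hzp, hw0s]; ring
    have hφzx : φ x = 0 := by rw [hφdef]; simp only [hWdef, hc]; ring
    -- zeros of deriv φ at the nodes
    have hφdm : deriv φ (-s) = 0 := by rw [hφderiv]; simp only; rw [hdm, hw1m]; ring
    have hφd0 : deriv φ 0 = 0 := by rw [hφderiv]; simp only; rw [hd0]; ring
    have hφdp : deriv φ s = 0 := by rw [hφderiv]; simp only; rw [hdp, hw1s]; ring
    -- six zeros of deriv φ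
    have hsix : ∃ v : Fin 6 → ℝ, StrictMono v ∧ ∀ i, deriv φ (v i) = 0 := by
      rcases lt_trichotomy x (-s) with h1 | h1 | h1
      · refine four_to_six hφd ![x, -s, 0, s] (sm4 h1 (by linarith) hspos) ?_ 0 ?_
        · intro i; fin_cases i <;> simpa
        · intro i hij; fin_cases i
          · exact absurd rfl hij
          · simpa using hφdm
          · simpa using hφd0
          · simpa using hφdp
      · exact absurd h1 hxm
      · rcases lt_trichotomy x 0 with h2 | h2 | h2
        · refine four_to_six hφd ![-s, x, 0, s] (sm4 h1 h2 hspos) ?_ 1 ?_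
          · intro i; fin_cases i <;> simpa
          · intro i hij; fin_cases i
            · simpa using hφdm
            · exact absurd rfl hij
            · simpa using hφd0
            · simpa using hφdp
        · exact absurd h2 hx0
        · rcases lt_trichotomy x s with h3 | h3 | h3
          · refine four_to_six hφd ![-s, 0, x, s] (sm4 (by linarith) h2 h3) ?_ 2 ?_
            · intro i; fin_cases i <;> simpa
            · intro i hij; fin_cases i
              · simpa using hφdm
              · simpa using hφd0
              · exact absurd rfl hij
              · simpa using hφdp
          · exact absurd h3 hxp
          · refine four_to_six hφd ![-s, 0, s, x] (sm4 (by linarith) hspos h3) ?_ 3 ?_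
            · intro i; fin_cases i <;> simpa
            · intro i hij; fin_cases i
              · simpa using hφdm
              · simpa using hφd0
              · simpa using hφdp
              · exact absurd rfl hij
    obtain ⟨v, hv, hvz⟩ := hsix
    obtain ⟨ξ, hξ⟩ := six_to_final hφc v hv hvz
    -- compute iteratedDeriv 6 φ
    have step : ∀ (k : ℕ) (p q : ℝ → ℝ), (∀ t, HasDerivAt p (q t) t) → k < 6 →
        iteratedDeriv k φ = (fun t => iteratedDeriv k h t * W - c * p t) →
        iteratedDeriv (k+1) φ = fun t => iteratedDeriv (k+1) h t * W - c * q t := by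
      intro k p q hp hk6 hk
      have hu : Differentiable ℝ (iteratedDeriv k h) :=
        hh.differentiable_iteratedDeriv k (by exact_mod_cast hk6)
      funext t
      rw [iteratedDeriv_succ, hk, iteratedDeriv_succ]
      exact ((((hu t).hasDerivAt).mul_const W).sub ((hp t).const_mul c)).deriv
    have e0 : iteratedDeriv 0 φ = fun t => iteratedDeriv 0 h t * W
        - c * (t ^ 6 - 3 * t ^ 4 + 9/4 * t ^ 2) := by
      simp only [iteratedDeriv_zero, hφdef]
    have e1 := step 0 _ _ hw01 (by norm_num) e0
    have hw12 : ∀ t : ℝ, HasDerivAt (fun t : ℝ => 6 * t ^ 5 - 12 * t ^ 3 + 9/2 * t)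
        (30 * t ^ 4 - 36 * t ^ 2 + 9/2) t := by
      intro t
      have := (((hasDerivAt_pow 5 t).const_mul 6).fun_sub ((hasDerivAt_pow 3 t).const_mul 12)).fun_add
        ((hasDerivAt_id t).const_mul (9/2))
      refine this.congr_deriv ?_
      all_goals first | ring | (norm_num; try ring)
    have e2 := step 1 _ _ hw12 (by norm_num) e1
    have hw23 : ∀ t : ℝ, HasDerivAt (fun t : ℝ => 30 * t ^ 4 - 36 * t ^ 2 + 9/2)
        (120 * t ^ 3 - 72 * t) t := by
      intro t
      have := (((hasDerivAt_pow 4 t).const_mul 30).fun_sub ((hasDerivAt_pow 2 t).const_mul 36)).fun_add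
        (hasDerivAt_const t (9/2 : ℝ))
      refine this.congr_deriv ?_
      all_goals first | ring | (norm_num; try ring)
    have e3 := step 2 _ _ hw23 (by norm_num) e2
    have hw34 : ∀ t : ℝ, HasDerivAt (fun t : ℝ => 120 * t ^ 3 - 72 * t)
        (360 * t ^ 2 - 72) t := by
      intro t
      have := ((hasDerivAt_pow 3 t).const_mul 120).fun_sub ((hasDerivAt_id t).const_mul 72)
      refine this.congr_deriv ?_
      all_goals first | ring | (norm_num; try ring)
    have e4 := step 3 _ _ hw34 (by norm_num) e3
    have hw45 : ∀ t : ℝ, HasDerivAt (fun t : ℝ => 360 * t ^ 2 - 72) (720 * t) t := by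
      intro t
      have := ((hasDerivAt_pow 2 t).const_mul 360).fun_sub (hasDerivAt_const t (72 : ℝ))
      refine this.congr_deriv ?_
      all_goals first | ring | (norm_num; try ring)
    have e5 := step 4 _ _ hw45 (by norm_num) e4
    have hw56 : ∀ t : ℝ, HasDerivAt (fun t : ℝ => 720 * t) (720 : ℝ) t := by
      intro t
      have := (hasDerivAt_id t).const_mul (720 : ℝ)
      simpa using this
    have e6 := step 5 _ _ hw56 (by norm_num) e5
    rw [e6] at hξ
    simp only at hξ
    exact ⟨ξ, by linarith⟩
  obtain ⟨ξ, hξ⟩ := key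
  have h1 : |720 * h x| ≤ M * W := by
    rw [hξ, abs_mul, abs_of_nonneg hW]
    exact mul_le_mul_of_nonneg_right (hM ξ) hW
  rw [abs_mul] at h1
  rw [hWdef] at h1 ⊢
  rw [abs_of_nonneg (by norm_num : (0:ℝ) ≤ 720)] at h1
  nlinarith [abs_nonneg (h x)]

lemma interp_all (s : ℝ) (hs2 : s ^ 2 = 3/2) (v0 v1 v2 e0 e1 e2 : ℝ) :
    ∃ H H' : ℝ → ℝ,
      ContDiff ℝ 6 H ∧
      (∀ t, HasDerivAt H (H' t) t) ∧
      H (-s) = v0 ∧ H 0 = v1 ∧ H s = v2 ∧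
      H' (-s) = e0 ∧ H' 0 = e1 ∧ H' s = e2 ∧
      (∀ y, iteratedDeriv 6 H y = 0) ∧
      Integrable (fun x : ℝ => H x * Real.exp (-(x ^ 2))) ∧
      (∫ x : ℝ, H x * Real.exp (-(x ^ 2)))
        = Real.sqrt Real.pi / 6 * v0 + 2 * Real.sqrt Real.pi / 3 * v1
          + Real.sqrt Real.pi / 6 * v2 := by
  have hp3 : s ^ 3 = 3/2 * s := by rw [pow_succ, hs2]
  have hp4 : s ^ 4 = 9/4 := by rw [show s ^ 4 = (s^2)^2 by ring, hs2]; norm_num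
  have hp5 : s ^ 5 = 9/4 * s := by rw [show s ^ 5 = (s^2)^2 * s by ring, hs2]; norm_num
  have hm2 : (-s) ^ 2 = 3/2 := by rw [show (-s)^2 = s^2 by ring, hs2]
  have hm3 : (-s) ^ 3 = -(3/2 * s) := by rw [show (-s)^3 = -(s^2*s) by ring, hs2]
  have hm4 : (-s) ^ 4 = 9/4 := by rw [show (-s)^4 = (s^2)^2 by ring, hs2]; norm_num
  have hm5 : (-s) ^ 5 = -(9/4 * s) := by
    rw [show (-s)^5 = -((s^2)^2*s) by ring, hs2]; norm_num
  set A := (v0 + v2)/2 - v1 with hA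
  set B := (e2 - e0) * s / 3 with hB
  set C := (v2 - v0) * s / 3 with hC
  set D := (e0 + e2)/2 with hD
  set c0 := v1 with hc0
  set c1 := e1 with hc1
  set c2 := 4*A/3 - B/2 with hc2
  set c3 := (5*C - D - 4*e1)/3 with hc3
  set c4 := B/3 - 4*A/9 with hc4
  set c5 := (4*e1 + 2*D - 6*C)/9 with hc5
  refine ⟨fun t => c0 + c1*t + c2*t^2 + c3*t^3 + c4*t^4 + c5*t^5,
    fun t => c1 + 2*c2*t + 3*c3*t^2 + 4*c4*t^3 + 5*c5*t^4, ?_, ?_, ?_, ?_, ?_, ?_, ?_, ?_, ?_, ?_, ?_⟩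
  · fun_prop
  · intro t
    have hlin : ∀ a : ℝ, HasDerivAt (fun y : ℝ => a * y) a t := by
      intro a; simpa using (hasDerivAt_id t).const_mul a
    have := (((((hasDerivAt_const t c0).fun_add (hlin c1)).fun_add
      ((hasDerivAt_pow 2 t).const_mul c2)).fun_add ((hasDerivAt_pow 3 t).const_mul c3)).fun_add
      ((hasDerivAt_pow 4 t).const_mul c4)).fun_add ((hasDerivAt_pow 5 t).const_mul c5)
    refine this.congr_deriv ?_
    all_goals first | ring | (norm_num; try ring)
  · simp only
    rw [hm5, hm4, hm3, hm2, hc0, hc1, hc2, hc3, hc4, hc5, hA, hB, hC, hD]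
    ring_nf
    rw [hs2]
    ring
  · simp only; rw [hc0]; ring
  · simp only
    rw [hp5, hp4, hp3, hs2, hc0, hc1, hc2, hc3, hc4, hc5, hA, hB, hC, hD]
    ring_nf
    rw [hs2]
    ring
  · simp only
    rw [hm4, hm3, hm2, hc1, hc2, hc3, hc4, hc5, hA, hB, hC, hD]
    ring_nf
    rw [hs2]
    ring
  · simp only; rw [hc1]; ring
  · simp only
    rw [hp4, hp3, hs2, hc1, hc2, hc3, hc4, hc5, hA, hB, hC, hD]
    ring_nf
    rw [hs2]
    ring
  · -- iterated derivative vanishes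
    intro y
    have dstep : ∀ (p q : ℝ → ℝ) (k : ℕ), (∀ t, HasDerivAt p (q t) t) →
        iteratedDeriv k (fun t : ℝ => c0 + c1*t + c2*t^2 + c3*t^3 + c4*t^4 + c5*t^5) = p →
        iteratedDeriv (k+1) (fun t : ℝ => c0 + c1*t + c2*t^2 + c3*t^3 + c4*t^4 + c5*t^5) = q := by
      intro p q k hp hk
      funext t
      rw [iteratedDeriv_succ, hk]
      exact (hp t).deriv
    have hlin : ∀ (a t : ℝ), HasDerivAt (fun y : ℝ => a * y) a t := by
      intro a t; simpa using (hasDerivAt_id t).const_mul a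
    have d0 : iteratedDeriv 0 (fun t : ℝ => c0 + c1*t + c2*t^2 + c3*t^3 + c4*t^4 + c5*t^5)
        = fun t : ℝ => c0 + c1*t + c2*t^2 + c3*t^3 + c4*t^4 + c5*t^5 := iteratedDeriv_zero
    have d1 := dstep _ (fun t => c1 + 2*c2*t + 3*c3*t^2 + 4*c4*t^3 + 5*c5*t^4) 0 (fun t => by
      have := (((((hasDerivAt_const t c0).fun_add (hlin c1 t)).fun_add
        ((hasDerivAt_pow 2 t).const_mul c2)).fun_add ((hasDerivAt_pow 3 t).const_mul c3)).fun_add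
        ((hasDerivAt_pow 4 t).const_mul c4)).fun_add ((hasDerivAt_pow 5 t).const_mul c5)
      refine this.congr_deriv ?_
      all_goals first | ring | (norm_num; try ring)) d0
    have d2 := dstep _ (fun t => 2*c2 + 6*c3*t + 12*c4*t^2 + 20*c5*t^3) 1 (fun t => by
      have := ((((hasDerivAt_const t c1).fun_add (hlin (2*c2) t)).fun_add
        ((hasDerivAt_pow 2 t).const_mul (3*c3))).fun_add
        ((hasDerivAt_pow 3 t).const_mul (4*c4))).fun_add ((hasDerivAt_pow 4 t).const_mul (5*c5))
      refine this.congr_deriv ?_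
      all_goals first | ring | (norm_num; try ring)) d1
    have d3 := dstep _ (fun t => 6*c3 + 24*c4*t + 60*c5*t^2) 2 (fun t => by
      have := (((hasDerivAt_const t (2*c2)).fun_add (hlin (6*c3) t)).fun_add
        ((hasDerivAt_pow 2 t).const_mul (12*c4))).fun_add ((hasDerivAt_pow 3 t).const_mul (20*c5))
      refine this.congr_deriv ?_
      all_goals first | ring | (norm_num; try ring)) d2
    have d4 := dstep _ (fun t => 24*c4 + 120*c5*t) 3 (fun t => by
      have := ((hasDerivAt_const t (6*c3)).fun_add (hlin (24*c4) t)).fun_add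
        ((hasDerivAt_pow 2 t).const_mul (60*c5))
      refine this.congr_deriv ?_
      all_goals first | ring | (norm_num; try ring)) d3
    have d5 := dstep _ (fun _ => 120*c5) 4 (fun t => by
      have := (hasDerivAt_const t (24*c4)).fun_add (hlin (120*c5) t)
      refine this.congr_deriv ?_
      all_goals first | ring | (norm_num; try ring)) d4
    have d6 := dstep _ (fun _ => 0) 5 (fun t => hasDerivAt_const t (120*c5)) d5
    rw [d6]
  · -- integrability
    have hF : Integrable (fun x : ℝ => c0*(x^0*Real.exp (-(x^2))) + (c1*(x^1*Real.exp (-(x^2)))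
        + (c2*(x^2*Real.exp (-(x^2))) + (c3*(x^3*Real.exp (-(x^2)))
        + (c4*(x^4*Real.exp (-(x^2))) + c5*(x^5*Real.exp (-(x^2)))))))) :=
      ((int_pow_gauss 0).const_mul c0).add (((int_pow_gauss 1).const_mul c1).add
        (((int_pow_gauss 2).const_mul c2).add (((int_pow_gauss 3).const_mul c3).add
        (((int_pow_gauss 4).const_mul c4).add ((int_pow_gauss 5).const_mul c5)))))
    exact hF.congr (Filter.Eventually.of_forall fun x => by simp only; ring)
  · -- integral value
    have heq : (fun x : ℝ => (c0 + c1*x + c2*x^2 + c3*x^3 + c4*x^4 + c5*x^5)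
          * Real.exp (-(x ^ 2)))
        = fun x : ℝ => c0*(x^0*Real.exp (-(x^2))) + (c1*(x^1*Real.exp (-(x^2)))
        + (c2*(x^2*Real.exp (-(x^2))) + (c3*(x^3*Real.exp (-(x^2)))
        + (c4*(x^4*Real.exp (-(x^2))) + c5*(x^5*Real.exp (-(x^2))))))) := by
      funext x; ring
    have i0 : Integrable (fun x : ℝ => c0*(x^0*Real.exp (-(x^2)))) := (int_pow_gauss 0).const_mul c0
    have i1 : Integrable (fun x : ℝ => c1*(x^1*Real.exp (-(x^2)))) := (int_pow_gauss 1).const_mul c1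
    have i2 : Integrable (fun x : ℝ => c2*(x^2*Real.exp (-(x^2)))) := (int_pow_gauss 2).const_mul c2
    have i3 : Integrable (fun x : ℝ => c3*(x^3*Real.exp (-(x^2)))) := (int_pow_gauss 3).const_mul c3
    have i4 : Integrable (fun x : ℝ => c4*(x^4*Real.exp (-(x^2)))) := (int_pow_gauss 4).const_mul c4
    have i5 : Integrable (fun x : ℝ => c5*(x^5*Real.exp (-(x^2)))) := (int_pow_gauss 5).const_mul c5
    have i45 : Integrable (fun x : ℝ => c4*(x^4*Real.exp (-(x^2))) + c5*(x^5*Real.exp (-(x^2)))) := i4.add i5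
    have i345 : Integrable (fun x : ℝ => c3*(x^3*Real.exp (-(x^2))) + (c4*(x^4*Real.exp (-(x^2))) + c5*(x^5*Real.exp (-(x^2))))) := i3.add i45
    have i2345 : Integrable (fun x : ℝ => c2*(x^2*Real.exp (-(x^2))) + (c3*(x^3*Real.exp (-(x^2))) + (c4*(x^4*Real.exp (-(x^2))) + c5*(x^5*Real.exp (-(x^2)))))) := i2.add i345
    have i12345 : Integrable (fun x : ℝ => c1*(x^1*Real.exp (-(x^2))) + (c2*(x^2*Real.exp (-(x^2))) + (c3*(x^3*Real.exp (-(x^2))) + (c4*(x^4*Real.exp (-(x^2))) + c5*(x^5*Real.exp (-(x^2))))))) := i1.add i2345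
    show (∫ x : ℝ, (c0 + c1*x + c2*x^2 + c3*x^3 + c4*x^4 + c5*x^5) * Real.exp (-(x ^ 2))) = _
    rw [heq]
    rw [integral_add i0 i12345, integral_add i1 i2345, integral_add i2 i345,
      integral_add i3 i45, integral_add i4 i5,
      integral_const_mul, integral_const_mul, integral_const_mul, integral_const_mul,
      integral_const_mul, integral_const_mul, mom0', mom1, mom2, mom3, mom4, mom5]
    rw [hc0, hc2, hc4, hA, hB]
    ring

/-- Error bound for the 3-point Gauss–Hermite quadrature: if `g` is 6-times continuously
differentiable with `|g⁽⁶⁾| ≤ M` everywhere and `x ↦ g(x)e^{−x²}` is integrable, then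
`|∫_ℝ g(x) e^{−x²} dx − ((√π/6)·g(−√(3/2)) + (2√π/3)·g(0) + (√π/6)·g(√(3/2)))| ≤ (√π/960)·M`. -/
theorem gauss_hermite_three_point_error (g : ℝ → ℝ) (M : ℝ)
    (hg : ContDiff ℝ 6 g) (hM : ∀ x : ℝ, |iteratedDeriv 6 g x| ≤ M)
    (hint : MeasureTheory.Integrable (fun x : ℝ => g x * Real.exp (-(x ^ 2)))) :
    |(∫ x : ℝ, g x * Real.exp (-(x ^ 2)))
        - (Real.sqrt Real.pi / 6 * g (-Real.sqrt (3 / 2))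
          + 2 * Real.sqrt Real.pi / 3 * g 0
          + Real.sqrt Real.pi / 6 * g (Real.sqrt (3 / 2)))|
      ≤ Real.sqrt Real.pi / 960 * M := by
  have hs2 : (Real.sqrt (3/2)) ^ 2 = 3/2 := Real.sq_sqrt (by norm_num)
  obtain ⟨H, H', HC, HD, Hm, H0, Hp, Dm, D0, Dp, Hit, Hint2, Hval⟩ :=
    interp_all (Real.sqrt (3/2)) hs2 (g (-Real.sqrt (3/2))) (g 0) (g (Real.sqrt (3/2)))
      (deriv g (-Real.sqrt (3/2))) (deriv g 0) (deriv g (Real.sqrt (3/2)))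
  set h : ℝ → ℝ := fun t => g t - H t with hhdef
  have hgd : Differentiable ℝ g := hg.differentiable (by norm_num)
  have hh : ContDiff ℝ 6 h := hg.sub HC
  have hdh : ∀ t, deriv h t = deriv g t - H' t := by
    intro t
    exact ((hgd t).hasDerivAt.sub (HD t)).deriv
  have hi6 : ∀ y, iteratedDeriv 6 h y = iteratedDeriv 6 g y := by
    intro y
    have : iteratedDeriv 6 h y = iteratedDeriv 6 g y - iteratedDeriv 6 H y := by
      rw [← iteratedDerivWithin_univ, ← iteratedDerivWithin_univ (f := g),
        ← iteratedDerivWithin_univ (f := H)]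
      exact iteratedDerivWithin_sub (hx := Set.mem_univ y) (h := uniqueDiffOn_univ)
        hg.contDiffWithinAt HC.contDiffWithinAt
    rw [this, Hit y, sub_zero]
  have pb : ∀ x : ℝ, |h x| ≤ M / 720 * (x ^ 2 * (x ^ 2 - 3/2) ^ 2) := by
    intro x
    refine pointwise_bound M h hh ?_ ?_ ?_ ?_ ?_ ?_ ?_ x
    · simp only [hhdef]; rw [Hm]; ring
    · simp only [hhdef]; rw [H0]; ring
    · simp only [hhdef]; rw [Hp]; ring
    · rw [hdh, Dm]; ring
    · rw [hdh, D0]; ring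
    · rw [hdh, Dp]; ring
    · intro y; rw [hi6 y]; exact hM y
  -- integrability of h * gaussian
  have hInth : Integrable (fun x : ℝ => h x * Real.exp (-(x ^ 2))) := by
    have := hint.sub Hint2
    exact this.congr (Filter.Eventually.of_forall fun x => by simp only [hhdef, Pi.sub_apply]; ring)
  -- the integral of the weight
  have hwint : (∫ x : ℝ, (x ^ 2 * (x ^ 2 - 3/2) ^ 2) * Real.exp (-(x ^ 2)))
      = 3 * Real.sqrt Real.pi / 4 := by
    have i6' := int_pow_gauss 6
    have i4' : Integrable (fun x : ℝ => 3*(x^4*Real.exp (-(x^2)))) := (int_pow_gauss 4).const_mul 3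
    have i2' : Integrable (fun x : ℝ => 9/4*(x^2*Real.exp (-(x^2)))) :=
      (int_pow_gauss 2).const_mul (9/4)
    have i64 : Integrable (fun x : ℝ => x^6*Real.exp (-(x^2)) - 3*(x^4*Real.exp (-(x^2)))) :=
      i6'.sub i4'
    have heq : (fun x : ℝ => (x ^ 2 * (x ^ 2 - 3/2) ^ 2) * Real.exp (-(x ^ 2)))
        = fun x : ℝ => (x^6*Real.exp (-(x^2)) - 3*(x^4*Real.exp (-(x^2))))
          + 9/4*(x^2*Real.exp (-(x^2))) := by
      funext x; ring
    rw [heq, integral_add i64 i2', integral_sub i6' i4', integral_const_mul, integral_const_mul,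
      mom6, mom4, mom2]
    ring
  -- bound the integral of h * gaussian
  have hbnd : |∫ x : ℝ, h x * Real.exp (-(x ^ 2))| ≤ Real.sqrt Real.pi / 960 * M := by
    have hBint : Integrable (fun x : ℝ => M / 720 * ((x ^ 2 * (x ^ 2 - 3/2) ^ 2)
        * Real.exp (-(x ^ 2)))) := by
      have i6' := int_pow_gauss 6
      have i4' : Integrable (fun x : ℝ => 3*(x^4*Real.exp (-(x^2)))) :=
        (int_pow_gauss 4).const_mul 3
      have i2' : Integrable (fun x : ℝ => 9/4*(x^2*Real.exp (-(x^2)))) :=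
        (int_pow_gauss 2).const_mul (9/4)
      have := (((i6'.sub i4').add i2').const_mul (M/720))
      exact this.congr (Filter.Eventually.of_forall fun x => by simp only [Pi.sub_apply, Pi.add_apply]; ring)
    have hmono : (∫ x : ℝ, |h x * Real.exp (-(x ^ 2))|)
        ≤ ∫ x : ℝ, M / 720 * ((x ^ 2 * (x ^ 2 - 3/2) ^ 2) * Real.exp (-(x ^ 2))) := by
      refine integral_mono hInth.abs hBint ?_
      intro x
      have hE : 0 < Real.exp (-(x ^ 2)) := Real.exp_pos _
      have := mul_le_mul_of_nonneg_right (pb x) hE.le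
      calc |h x * Real.exp (-(x ^ 2))| = |h x| * Real.exp (-(x ^ 2)) := by
            rw [abs_mul, abs_of_pos hE]
        _ ≤ M / 720 * (x ^ 2 * (x ^ 2 - 3/2) ^ 2) * Real.exp (-(x ^ 2)) := this
        _ = M / 720 * ((x ^ 2 * (x ^ 2 - 3/2) ^ 2) * Real.exp (-(x ^ 2))) := by ring
    have habs : |∫ x : ℝ, h x * Real.exp (-(x ^ 2))|
        ≤ ∫ x : ℝ, |h x * Real.exp (-(x ^ 2))| := by
      have t := norm_integral_le_integral_norm (μ := volume) (fun x : ℝ => h x * Real.exp (-(x ^ 2)))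
      simpa only [Real.norm_eq_abs] using t
    have hval : (∫ x : ℝ, M / 720 * ((x ^ 2 * (x ^ 2 - 3/2) ^ 2) * Real.exp (-(x ^ 2))))
        = Real.sqrt Real.pi / 960 * M := by
      rw [integral_const_mul, hwint]; ring
    linarith
  -- final computation
  have hsplit : (∫ x : ℝ, h x * Real.exp (-(x ^ 2)))
      = (∫ x : ℝ, g x * Real.exp (-(x ^ 2))) - ∫ x : ℝ, H x * Real.exp (-(x ^ 2)) := by
    have heq : (fun x : ℝ => h x * Real.exp (-(x ^ 2)))
        = fun x : ℝ => g x * Real.exp (-(x ^ 2)) - H x * Real.exp (-(x ^ 2)) := by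
      funext x; simp only [hhdef]; ring
    rw [heq, integral_sub hint Hint2]
  rw [← Hval, ← hsplit]
  exact hbnd
end

section
/- Consider the characteristic polynomial of the 2-step non-equidistant scheme, P_β^2(λ) = −(5/4)λ⁴ + (4/3)λ³ − 1/12. Then P_β^2(1) = 0, λ = 1 is a simple root, and every complex root λ ≠ 1 of P_β^2 satisfies |λ| < 1/2. In particular the roots of P_β^2 satisfy the root conditions: every root has modulus at most 1 and every root of modulus 1 is simple. -/
open Polynomial

/-- The characteristic polynomial of the 2-step non-equidistant scheme:
`P_β^2(λ) = −(5/4)λ⁴ + (4/3)λ³ − 1/12`. -/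
noncomputable def charPolyBeta2 : Polynomial ℂ :=
  C (-(5 / 4) : ℂ) * X ^ 4 + C (4 / 3 : ℂ) * X ^ 3 + C (-(1 / 12) : ℂ)

noncomputable def auxQ : Polynomial ℂ := C 15 * X ^ 3 - C 1 * X ^ 2 - C 1 * X - C 1

lemma charPolyBeta2_factor : charPolyBeta2 = C (-(1/12) : ℂ) * (X - C 1) * auxQ := by
  apply Polynomial.funext
  intro z
  simp [charPolyBeta2, auxQ]
  ring

lemma auxQ_ne_zero : auxQ ≠ 0 := by
  intro h
  have : auxQ.eval 1 = 0 := by rw [h]; simp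
  simp [auxQ] at this
  norm_num at this

lemma auxQ_root_small (z : ℂ) (hz : auxQ.eval z = 0) : ‖z‖ < 1 / 2 := by
  have h : (15 : ℂ) * z ^ 3 = z ^ 2 + z + 1 := by
    simp [auxQ] at hz
    linear_combination hz
  by_contra hle
  push_neg at hle
  set t := ‖z‖ with ht
  have h1 : (15 : ℝ) * t ^ 3 = ‖z ^ 2 + z + 1‖ := by
    rw [← h]
    simp [norm_mul, norm_pow, ht]
  have h2 : ‖z ^ 2 + z + 1‖ ≤ t ^ 2 + t + 1 := by
    calc ‖z ^ 2 + z + 1‖ ≤ ‖z ^ 2 + z‖ + ‖(1 : ℂ)‖ :=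
          norm_add_le _ _
      _ ≤ ‖z ^ 2‖ + ‖z‖ + 1 := by
          have := norm_add_le (z ^ 2) z
          simp only [norm_one]
          linarith
      _ = t ^ 2 + t + 1 := by rw [norm_pow]
  have h3 : (15 : ℝ) * t ^ 3 ≤ t ^ 2 + t + 1 := by linarith
  nlinarith [sq_nonneg (t - 1/2), sq_nonneg t, hle]

/-- `P_β^2(1) = 0`, `λ = 1` is a simple root, every complex root `λ ≠ 1` satisfies
`|λ| < 1/2`, and the root conditions hold: every root has modulus at most 1 and every root
of modulus 1 is simple. -/
theorem charPolyBeta2_root_conditions :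
    charPolyBeta2.eval 1 = 0 ∧
    charPolyBeta2.rootMultiplicity 1 = 1 ∧
    (∀ z : ℂ, charPolyBeta2.eval z = 0 → z ≠ 1 → ‖z‖ < 1 / 2) ∧
    (∀ z : ℂ, charPolyBeta2.eval z = 0 →
      ‖z‖ ≤ 1 ∧ (‖z‖ = 1 → charPolyBeta2.rootMultiplicity z = 1)) := by
  have heval1 : charPolyBeta2.eval 1 = 0 := by
    simp [charPolyBeta2]; ring
  have hmul1 : charPolyBeta2.rootMultiplicity 1 = 1 := by
    rw [charPolyBeta2_factor]
    have hC : (C (-(1/12) : ℂ)) ≠ 0 := by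
      simp only [ne_eq, C_eq_zero]; norm_num
    have hX : (X - C (1:ℂ)) ≠ 0 := X_sub_C_ne_zero 1
    rw [rootMultiplicity_mul (mul_ne_zero (mul_ne_zero hC hX) auxQ_ne_zero),
      rootMultiplicity_mul (mul_ne_zero hC hX),
      rootMultiplicity_eq_zero (by simp), rootMultiplicity_X_sub_C_self,
      rootMultiplicity_eq_zero (by simp [IsRoot, auxQ]; norm_num)]
  have hsmall : ∀ z : ℂ, charPolyBeta2.eval z = 0 → z ≠ 1 → ‖z‖ < 1 / 2 := by
    intro z hz hz1
    apply auxQ_root_small z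
    rw [charPolyBeta2_factor] at hz
    simp only [eval_mul, eval_sub, eval_X, eval_C, mul_eq_zero] at hz
    rcases hz with (h | h) | h
    · norm_num at h
    · exact absurd (sub_eq_zero.mp h) hz1
    · exact h
  refine ⟨heval1, hmul1, hsmall, fun z hz => ?_⟩
  by_cases hz1 : z = 1
  · subst hz1; simp [hmul1]
  · have := hsmall z hz hz1
    constructor
    · linarith
    · intro h; linarith
end
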